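/- (Soundness of lex-leader symmetry breaking.) Let m : ℕ and let F be a satisfiable set of PB constraints over V = Fin m. Let G be a set of functions g : (Fin m → Bool) → (Fin m → Bool) such that for every g ∈ G and every assignment α satisfying F, the assignment g(α) also satisfies F. Then there exists an assignment α satisfying F such that for every g ∈ G, α ≤ g(α) in the lexicographic order on Fin m → Bool (with false < true and higher priority to smaller indices). -/

import Mathlib

structure PBConstraint (V : Type) where
  coeff : V → ℤ
  pol : V → Bool
  degree : ℤ

def PBSat {V : Type} [Fintype V] (ρ : V → Bool) (c : PBConstraint V) : Prop :=
  c.degree ≤ ∑ x : V, c.coeff x * (if ρ x = c.pol x then 1 else 0)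

def SatSet {V : Type} [Fintype V] (ρ : V → Bool) (S : Set (PBConstraint V)) : Prop :=
  ∀ c ∈ S, PBSat ρ c

def PBSatisfiable {V : Type} [Fintype V] (S : Set (PBConstraint V)) : Prop :=
  ∃ ρ : V → Bool, SatSet ρ S

/-- The lexicographic order on assignments `Fin m → Bool`
(with `false < true` and higher priority to smaller indices). -/
def LexLe {m : ℕ} (α β : Fin m → Bool) : Prop :=
  α = β ∨ ∃ i : Fin m, (∀ j : Fin m, j < i → α j = β j) ∧
    α i = false ∧ β i = true

theorem lex_leader_symmetry_breaking_sound (m : ℕ)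
    (F : Set (PBConstraint (Fin m)))
    (hFsat : PBSatisfiable F)
    (G : Set ((Fin m → Bool) → (Fin m → Bool)))
    (hG : ∀ g ∈ G, ∀ α : Fin m → Bool, SatSet α F → SatSet (g α) F) :
    ∃ α : Fin m → Bool, SatSet α F ∧ ∀ g ∈ G, LexLe α (g α) := by
  classical
  letI : LinearOrder (Lex (Fin m → Bool)) :=
    @Pi.Lex.linearOrder (Fin m) (fun _ => Bool) _ Finite.to_wellFoundedLT _
  obtain ⟨ρ, hρ⟩ := hFsat
  obtain ⟨α, hmem, hmin⟩ := Finset.exists_min_image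
    (Finset.univ.filter (fun α : Fin m → Bool => SatSet α F))
    (fun α : (Fin m → Bool) => (toLex α : Lex (Fin m → Bool))) ⟨ρ, by simp [hρ]⟩
  simp only [Finset.mem_filter, Finset.mem_univ, true_and] at hmem
  refine ⟨α, hmem, fun g hg => ?_⟩
  have hgα : SatSet (g α) F := hG g hg α hmem
  have hle : toLex α ≤ toLex (g α) := hmin (g α) (by simp [hgα])
  rcases eq_or_lt_of_le hle with h | h
  · exact Or.inl (toLex.injective h)
  · obtain ⟨i, hpre, hi⟩ := h
    exact Or.inr ⟨i, fun j hj => hpre j hj,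
      (Bool.lt_iff.mp hi).1, (Bool.lt_iff.mp hi).2⟩
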